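/- For x ∈ ℝⁿ with all coordinates nonzero and n := ‖x‖_p, the diagonal partial derivative of HNTanh is ∂yᵢ/∂xᵢ = tanh(n)/n + |xᵢ|^p · ((n(1 − tanh²(n)) − tanh(n))/n²) · n^{1−p}. -/

import Mathlib

/-- The `p`-norm `‖x‖_p = (Σₗ |xₗ|^p)^(1/p)` on `ℝᵐ`. -/
noncomputable def pnorm (p : ℝ) {m : ℕ} (x : Fin m → ℝ) : ℝ :=
  (∑ l, |x l| ^ p) ^ (1 / p)

lemma hasDerivAt_tanh' (y : ℝ) :
    HasDerivAt Real.tanh (1 - Real.tanh y ^ 2) y := by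
  have hc : Real.cosh y ≠ 0 := ne_of_gt (Real.cosh_pos y)
  have h := (Real.hasDerivAt_sinh y).div (Real.hasDerivAt_cosh y) hc
  have hfun : Real.tanh = fun t : ℝ => Real.sinh t / Real.cosh t := by
    funext t; exact Real.tanh_eq_sinh_div_cosh t
  rw [hfun]
  refine h.congr_deriv ?_
  have hid := Real.cosh_sq_sub_sinh_sq y
  beta_reduce
  field_simp

/-- Diagonal partial derivative of HNTanh: at a point `x` with all coordinates
nonzero, writing `n = ‖x‖_p`, the `i`-th component `yᵢ = (xᵢ/‖x‖_p) tanh ‖x‖_p`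
satisfies
`∂yᵢ/∂xᵢ = tanh(n)/n + |xᵢ|^p ((n(1 − tanh²n) − tanh n)/n²) n^{1−p}`. -/
theorem hntanh_diag_partial (m : ℕ) (p : ℝ) (hp : 1 < p)
    (x : Fin m → ℝ) (hx : ∀ k, x k ≠ 0) (i : Fin m) :
    HasDerivAt
      (fun t : ℝ =>
        (Function.update x i t i / pnorm p (Function.update x i t)) *
          Real.tanh (pnorm p (Function.update x i t)))
      (Real.tanh (pnorm p x) / pnorm p x +
        |x i| ^ p *
          ((pnorm p x * (1 - Real.tanh (pnorm p x) ^ 2) - Real.tanh (pnorm p x)) /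
            (pnorm p x) ^ 2) * (pnorm p x) ^ (1 - p))
      (x i) := by
  have hp0 : (0:ℝ) < p := by linarith
  have ha : (0:ℝ) < |x i| := abs_pos.mpr (hx i)
  -- rewrite the sum
  set c : ℝ := ∑ l ∈ Finset.univ.erase i, |x l| ^ p with hc
  have hc0 : 0 ≤ c := Finset.sum_nonneg fun l _ =>
    Real.rpow_nonneg (abs_nonneg _) _
  have hSeq : ∀ t : ℝ, (∑ l, |Function.update x i t l| ^ p) = |t| ^ p + c := by
    intro t
    have : (fun l => |Function.update x i t l| ^ p) =
        Function.update (fun k => |x k| ^ p) i (|t| ^ p) := by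
      funext l
      rcases eq_or_ne l i with rfl | h
      · simp
      · simp [Function.update_of_ne h]
    rw [this]
    rw [Finset.sum_update_of_mem (Finset.mem_univ i)]
    simp [hc, Finset.sum_erase_eq_sub, Finset.sdiff_singleton_eq_erase]
  -- S and its positivity at x i
  set S : ℝ := |x i| ^ p + c with hS
  have hS0 : 0 < S := by
    have : (0:ℝ) < |x i| ^ p := Real.rpow_pos_of_pos ha p
    linarith
  have hpnorm : ∀ t : ℝ, pnorm p (Function.update x i t) = (|t| ^ p + c) ^ (1/p) := by
    intro t; rw [pnorm, hSeq t]
  set n : ℝ := S ^ (1/p) with hn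
  have hn0 : 0 < n := Real.rpow_pos_of_pos hS0 _
  have hpx : pnorm p x = n := by
    have h := hpnorm (x i)
    rwa [Function.update_eq_self, ← hS, ← hn] at h
  -- derivative of S as function of t
  have hSd : HasDerivAt (fun t : ℝ => |t| ^ p + c)
      (p * |x i| ^ (p - 2) * x i) (x i) :=
    (hasDerivAt_abs_rpow (x i) hp).add_const c
  -- derivative of n(t)
  have hnd : HasDerivAt (fun t : ℝ => (|t| ^ p + c) ^ (1/p))
      (1/p * S ^ (1/p - 1) * (p * |x i| ^ (p - 2) * x i)) (x i) := by
    have h1 : HasDerivAt (fun s : ℝ => s ^ (1/p)) (1/p * S ^ (1/p - 1)) S :=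
      Real.hasDerivAt_rpow_const (Or.inl (ne_of_gt hS0))
    exact h1.comp (x i) hSd
  set N' : ℝ := 1/p * S ^ (1/p - 1) * (p * |x i| ^ (p - 2) * x i) with hN'
  -- overall derivative
  have htanh : HasDerivAt (fun t : ℝ => Real.tanh ((|t| ^ p + c) ^ (1/p)))
      ((1 - Real.tanh n ^ 2) * N') (x i) :=
    by exact (hasDerivAt_tanh' n).comp (x i) hnd
  have hdiv : HasDerivAt (fun t : ℝ => t / (|t| ^ p + c) ^ (1/p))
      ((1 * n - x i * N') / n ^ 2) (x i) :=
    (hasDerivAt_id (x i)).div hnd (ne_of_gt hn0)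
  have hmul := hdiv.mul htanh
  -- rewrite the goal function
  have hfun : (fun t : ℝ =>
      (Function.update x i t i / pnorm p (Function.update x i t)) *
        Real.tanh (pnorm p (Function.update x i t))) =
      fun t : ℝ => (t / (|t| ^ p + c) ^ (1/p)) *
        Real.tanh ((|t| ^ p + c) ^ (1/p)) := by
    funext t; rw [hpnorm t, Function.update_self]
  rw [hfun, hpx]
  rw [show ((|x i| ^ p + c : ℝ)) = S from hS.symm, ← hn] at hmul
  refine hmul.congr_deriv ?_
  -- now arithmetic: show the target equals the computed derivative
  have hxiN' : x i * N' = |x i| ^ p * n ^ (1 - p) := by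
    have h1 : x i * (p * |x i| ^ (p - 2) * x i) = p * |x i| ^ p := by
      have hsq : x i * x i = |x i| ^ (2:ℝ) := by
        rw [show ((2:ℝ)) = ((2:ℕ):ℝ) by norm_num, Real.rpow_natCast, sq_abs, sq]
      have h2' : |x i| ^ (p - 2) * |x i| ^ (2:ℝ) = |x i| ^ p := by
        rw [← Real.rpow_add ha]; ring_nf
      calc x i * (p * |x i| ^ (p - 2) * x i)
          = p * (|x i| ^ (p - 2) * (x i * x i)) := by ring
        _ = p * (|x i| ^ (p - 2) * |x i| ^ (2:ℝ)) := by rw [hsq]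
        _ = p * |x i| ^ p := by rw [h2']
    have h2 : n ^ (1 - p) = S ^ (1/p - 1) := by
      rw [hn, ← Real.rpow_mul (le_of_lt hS0)]
      congr 1
      field_simp
    calc x i * N' = 1/p * S ^ (1/p - 1) * (x i * (p * |x i| ^ (p - 2) * x i)) := by
          rw [hN']; ring
      _ = 1/p * S ^ (1/p - 1) * (p * |x i| ^ p) := by rw [h1]
      _ = |x i| ^ p * n ^ (1 - p) := by
          rw [h2]; field_simp
  have hN'' : N' = |x i| ^ p * n ^ (1 - p) / x i := by
    rw [eq_div_iff (hx i)]
    rw [← hxiN']; ring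
  rw [hN'']
  have hni : n ≠ 0 := ne_of_gt hn0
  field_simp [hx i]
  ring
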